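/- Let σ, σ₀ > 0 and T > 0. The functions M(t) = (σ² + σ₀²t)(T − t) / (σ²(σ² + σ₀²(2T − t))) and U(t) = log((σ² + σ₀²T)/√((σ² + σ₀²t)(σ² + σ₀²(2T − t)))) on [0,T] satisfy M(T) = U(T) = 0 and the ODE system: M'(t) = −2σ²σ₀⁴/(σ² + σ₀²t)² · M(t)² + 4σ₀²/(σ² + σ₀²t) · M(t) − σ⁻², and U'(t) = −σ²σ₀⁴/(σ² + σ₀²t)² · M(t). -/

import Mathlib

/-- One-dimensional Bayesian risk premium coefficient `M`. -/
noncomputable def stmt13M (σ σ₀ T t : ℝ) : ℝ :=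
  (σ ^ 2 + σ₀ ^ 2 * t) * (T - t) / (σ ^ 2 * (σ ^ 2 + σ₀ ^ 2 * (2 * T - t)))

/-- One-dimensional Bayesian risk premium coefficient `U`. -/
noncomputable def stmt13U (σ σ₀ T t : ℝ) : ℝ :=
  Real.log ((σ ^ 2 + σ₀ ^ 2 * T) /
    Real.sqrt ((σ ^ 2 + σ₀ ^ 2 * t) * (σ ^ 2 + σ₀ ^ 2 * (2 * T - t))))

/-- The one-dimensional Riccati system for the Gaussian Bayesian risk premium:
`M(T) = U(T) = 0`, `M' = −2σ²σ₀⁴/(σ²+σ₀²t)²·M² + 4σ₀²/(σ²+σ₀²t)·M − σ⁻²` and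
`U' = −σ²σ₀⁴/(σ²+σ₀²t)²·M`. -/
theorem stmt13 (σ σ₀ T : ℝ) (hσ : 0 < σ) (hσ₀ : 0 < σ₀) (hT : 0 < T) :
    stmt13M σ σ₀ T T = 0 ∧ stmt13U σ σ₀ T T = 0 ∧
    ∀ t ∈ Set.Icc (0:ℝ) T,
      HasDerivAt (stmt13M σ σ₀ T)
        (-(2 * σ ^ 2 * σ₀ ^ 4) / (σ ^ 2 + σ₀ ^ 2 * t) ^ 2 * (stmt13M σ σ₀ T t) ^ 2
          + 4 * σ₀ ^ 2 / (σ ^ 2 + σ₀ ^ 2 * t) * stmt13M σ σ₀ T t - σ⁻¹ ^ 2) t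
      ∧ HasDerivAt (stmt13U σ σ₀ T)
          (-(σ ^ 2 * σ₀ ^ 4) / (σ ^ 2 + σ₀ ^ 2 * t) ^ 2 * stmt13M σ σ₀ T t) t := by
  have hσ2 : (0:ℝ) < σ ^ 2 := by positivity
  have hc : (0:ℝ) < σ ^ 2 + σ₀ ^ 2 * T := by positivity
  refine ⟨by simp [stmt13M], ?_, ?_⟩
  · have h2 : (2:ℝ) * T - T = T := by ring
    have : Real.sqrt ((σ ^ 2 + σ₀ ^ 2 * T) * (σ ^ 2 + σ₀ ^ 2 * (2 * T - T)))
        = σ ^ 2 + σ₀ ^ 2 * T := by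
      rw [h2, Real.sqrt_mul_self hc.le]
    simp [stmt13U, this, div_self hc.ne']
  · intro t ht
    obtain ⟨ht0, htT⟩ := ht
    have hA : (0:ℝ) < σ ^ 2 + σ₀ ^ 2 * t := by positivity
    have hB : (0:ℝ) < σ ^ 2 + σ₀ ^ 2 * (2 * T - t) := by nlinarith
    have hdA : HasDerivAt (fun s : ℝ => σ ^ 2 + σ₀ ^ 2 * s) (σ₀ ^ 2) t := by
      simpa using ((hasDerivAt_id t).const_mul (σ₀ ^ 2)).const_add (σ ^ 2)
    have hdB : HasDerivAt (fun s : ℝ => σ ^ 2 + σ₀ ^ 2 * (2 * T - s)) (-σ₀ ^ 2) t := by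
      have : HasDerivAt (fun s : ℝ => 2 * T - s) (-1) t := by
        simpa using (hasDerivAt_id t).const_sub (2 * T)
      simpa using (this.const_mul (σ₀ ^ 2)).const_add (σ ^ 2)
    have hdTt : HasDerivAt (fun s : ℝ => T - s) (-1) t := by
      simpa using (hasDerivAt_id t).const_sub T
    have hdDen : HasDerivAt (fun s : ℝ => σ ^ 2 * (σ ^ 2 + σ₀ ^ 2 * (2 * T - s)))
        (σ ^ 2 * (-σ₀ ^ 2)) t := hdB.const_mul _
    have hDenNe : σ ^ 2 * (σ ^ 2 + σ₀ ^ 2 * (2 * T - t)) ≠ 0 := by positivity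
    have hdM : HasDerivAt (stmt13M σ σ₀ T)
        (((σ₀ ^ 2 * (T - t) + (σ ^ 2 + σ₀ ^ 2 * t) * (-1)) *
            (σ ^ 2 * (σ ^ 2 + σ₀ ^ 2 * (2 * T - t)))
          - (σ ^ 2 + σ₀ ^ 2 * t) * (T - t) * (σ ^ 2 * (-σ₀ ^ 2))) /
          (σ ^ 2 * (σ ^ 2 + σ₀ ^ 2 * (2 * T - t))) ^ 2) t := by
      exact (hdA.mul hdTt).div hdDen hDenNe
    constructor
    · convert hdM using 1
      simp only [stmt13M]
      field_simp
      ring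
    · -- U part
      have hABpos : (0:ℝ) < (σ ^ 2 + σ₀ ^ 2 * t) * (σ ^ 2 + σ₀ ^ 2 * (2 * T - t)) :=
        mul_pos hA hB
      set P : ℝ := (σ ^ 2 + σ₀ ^ 2 * t) * (σ ^ 2 + σ₀ ^ 2 * (2 * T - t)) with hP
      have hdAB : HasDerivAt (fun s : ℝ =>
          (σ ^ 2 + σ₀ ^ 2 * s) * (σ ^ 2 + σ₀ ^ 2 * (2 * T - s)))
          (σ₀ ^ 2 * (σ ^ 2 + σ₀ ^ 2 * (2 * T - t)) + (σ ^ 2 + σ₀ ^ 2 * t) * (-σ₀ ^ 2)) t :=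
        hdA.mul hdB
      have hsqNe : Real.sqrt P ≠ 0 := (Real.sqrt_pos.2 hABpos).ne'
      have hdsq : HasDerivAt (fun s : ℝ => Real.sqrt
          ((σ ^ 2 + σ₀ ^ 2 * s) * (σ ^ 2 + σ₀ ^ 2 * (2 * T - s))))
          (1 / (2 * Real.sqrt P) *
            (σ₀ ^ 2 * (σ ^ 2 + σ₀ ^ 2 * (2 * T - t)) + (σ ^ 2 + σ₀ ^ 2 * t) * (-σ₀ ^ 2))) t := by
        simpa [Function.comp_def] using (Real.hasDerivAt_sqrt hABpos.ne').comp t hdAB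
      have hdf : HasDerivAt (fun s : ℝ => (σ ^ 2 + σ₀ ^ 2 * T) / Real.sqrt
          ((σ ^ 2 + σ₀ ^ 2 * s) * (σ ^ 2 + σ₀ ^ 2 * (2 * T - s))))
          ((0 * Real.sqrt P - (σ ^ 2 + σ₀ ^ 2 * T) *
            (1 / (2 * Real.sqrt P) *
              (σ₀ ^ 2 * (σ ^ 2 + σ₀ ^ 2 * (2 * T - t)) + (σ ^ 2 + σ₀ ^ 2 * t) * (-σ₀ ^ 2)))) /
            (Real.sqrt P) ^ 2) t :=
        (hasDerivAt_const t _).div hdsq hsqNe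
      have hfNe : (σ ^ 2 + σ₀ ^ 2 * T) / Real.sqrt P ≠ 0 :=
        div_ne_zero hc.ne' hsqNe
      have hdU := hdf.log hfNe
      convert hdU using 1
      · rfl
      simp only [stmt13M]
      rw [← hP]
      have hsq2 : (Real.sqrt P) ^ 2 = P := Real.sq_sqrt hABpos.le
      rw [hsq2]
      rw [div_div_div_eq]
      rw [hP] at hsq2 ⊢
      have hsNe' : Real.sqrt ((σ ^ 2 + σ₀ ^ 2 * t) * (σ ^ 2 + σ₀ ^ 2 * (2 * T - t))) ≠ 0 := by
        rw [← hP]; exact hsqNe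
      have hBne := hB.ne'
      have hAne := hA.ne'
      generalize Real.sqrt ((σ ^ 2 + σ₀ ^ 2 * t) * (σ ^ 2 + σ₀ ^ 2 * (2 * T - t))) = r at hsNe' hsq2 ⊢
      field_simp
      ring
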